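/- Let a and b be pure elements of the Cayley–Dickson algebra A_n with ‖a‖ = ‖b‖ = 1, ⟨a,b⟩ = 0, and suppose a alternates strongly with b, i.e. (a,a,b) = 0 and (a,b,b) = 0. Then {e₀, a, b, ab} is an orthonormal set, the linear span V(a;b) of {e₀, a, b, ab} is closed under multiplication, and the correspondence e₀ ↦ e₀, e₁ ↦ a, e₂ ↦ b, e₃ ↦ ab is an algebra isomorphism from the quaternions A_2 = ℍ onto V(a;b). -/

import Mathlib

noncomputable section

/-- The Cayley–Dickson algebra `A n` of dimension `2^n` over `ℝ`:
`A 0 = ℝ` and `A (n+1) = A n × A n`. -/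
def CD : ℕ → Type
  | 0 => ℝ
  | n + 1 => CD n × CD n

namespace CD

instance instAddCommGroup : (n : ℕ) → AddCommGroup (CD n)
  | 0 => inferInstanceAs (AddCommGroup ℝ)
  | n + 1 =>
    letI := instAddCommGroup n
    inferInstanceAs (AddCommGroup (CD n × CD n))

instance instModule : (n : ℕ) → Module ℝ (CD n)
  | 0 => inferInstanceAs (Module ℝ ℝ)
  | n + 1 =>
    letI := instAddCommGroup n
    letI := instModule n
    inferInstanceAs (Module ℝ (CD n × CD n))

/-- Conjugation: `x̄ = x` on `ℝ` and `(x₁,x₂)‾ = (x̄₁, -x₂)`. -/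
protected def conj : {n : ℕ} → CD n → CD n
  | 0, x => x
  | _ + 1, x => (CD.conj x.1, -x.2)

/-- Cayley–Dickson multiplication: `(a,b)(x,y) = (ax - ȳb, ya + bx̄)`. -/
protected def mul : {n : ℕ} → CD n → CD n → CD n
  | 0, x, y => (show ℝ from x) * (show ℝ from y)
  | _ + 1, x, y =>
    (CD.mul x.1 y.1 - CD.mul (CD.conj y.2) x.2,
     CD.mul y.2 x.1 + CD.mul x.2 (CD.conj y.1))

instance instMul (n : ℕ) : Mul (CD n) := ⟨CD.mul⟩

/-- The multiplicative unit `e₀` of `A n`. -/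
def e0 : (n : ℕ) → CD n
  | 0 => (1 : ℝ)
  | n + 1 => (e0 n, 0)

/-- The element `ẽ₀ = (0, e₀)` of `A n` (junk value `0` for `n = 0`). -/
def te0 : (n : ℕ) → CD n
  | 0 => 0
  | n + 1 => (0, e0 n)

/-- The "complexification" `α̃ = (-b, a)` of `α = (a,b)` (junk value `0` for `n = 0`);
note `α̃ = α·ẽ₀`. -/
def tilde : {n : ℕ} → CD n → CD n
  | 0, _ => 0
  | _ + 1, x => (-x.2, x.1)

/-- The standard inner product on `A n ≅ ℝ^{2^n}`. -/
protected def inner : {n : ℕ} → CD n → CD n → ℝ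
  | 0, x, y => (show ℝ from x) * (show ℝ from y)
  | _ + 1, x, y => CD.inner x.1 y.1 + CD.inner x.2 y.2

/-- The euclidean norm on `A n`. -/
protected def norm {n : ℕ} (x : CD n) : ℝ := Real.sqrt (CD.inner x x)

/-- `x` is pure if its trace `t(x) = x + x̄` vanishes. -/
def IsPure {n : ℕ} (x : CD n) : Prop := x + CD.conj x = 0

/-- `x = (a,b)` is doubly pure if both `a` and `b` are pure
(equivalently, both `x` and `x̃` are pure). -/
def IsDoublyPure : {n : ℕ} → CD n → Prop
  | 0, x => x = 0
  | _ + 1, x => IsPure x.1 ∧ IsPure x.2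

/-- The associator `(x,y,z) = (xy)z - x(yz)`. -/
def assoc {n : ℕ} (x y z : CD n) : CD n := (x * y) * z - x * (y * z)

/-- The subspace `ℍ_a`: the real span of `{e₀, ã, a, ẽ₀}`. -/
def Ha {n : ℕ} (a : CD n) : Submodule ℝ (CD n) :=
  Submodule.span ℝ {e0 n, tilde a, a, te0 n}

/-- The orthogonal complement `ℍ_a^⊥` of `ℍ_a` in `A n`. -/
def HaPerp {n : ℕ} (a : CD n) : Set (CD n) :=
  {x | ∀ y ∈ Ha a, CD.inner x y = 0}

/-- The element `ε = (ẽ₀, 0)` of `A (n+1)`. -/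
def eps (n : ℕ) : CD (n + 1) := (te0 n, 0)

/-- `α̂ = (b,a)` for `α = (a,b) ∈ A (n+1)`. -/
def hat {n : ℕ} (x : CD (n + 1)) : CD (n + 1) := (x.2, x.1)

/-- The element `(a, b)` of `A (n+1) = A n × A n`. -/
def pair {n : ℕ} (a b : CD n) : CD (n + 1) := (a, b)

end CD

/-- The canonical basis vector `e₁` of `A 2 = ℍ`. -/
def q1 : CD 2 := (CD.te0 1, 0)
/-- The canonical basis vector `e₂` of `A 2 = ℍ`. -/
def q2 : CD 2 := (0, CD.e0 1)
/-- The canonical basis vector `e₃` of `A 2 = ℍ`. -/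
def q3 : CD 2 := (0, CD.te0 1)

namespace CD
variable {n : ℕ}

lemma mul_def (x y : CD (n+1)) :
    x * y = (x.1 * y.1 - CD.conj y.2 * x.2, y.2 * x.1 + x.2 * CD.conj y.1) := rfl
lemma add_def (x y : CD (n+1)) : x + y = (x.1 + y.1, x.2 + y.2) := rfl
lemma smul_def (r : ℝ) (x : CD (n+1)) : r • x = (r • x.1, r • x.2) := rfl
lemma neg_def (x : CD (n+1)) : -x = (-x.1, -x.2) := rfl
lemma sub_def (x y : CD (n+1)) : x - y = (x.1 - y.1, x.2 - y.2) := rfl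
lemma zero_def : (0 : CD (n+1)) = ((0 : CD n), (0 : CD n)) := rfl
lemma conj_def (x : CD (n+1)) : CD.conj x = (CD.conj x.1, -x.2) := rfl
lemma inner_def (x y : CD (n+1)) : CD.inner x y = CD.inner x.1 y.1 + CD.inner x.2 y.2 := rfl
lemma e0_succ : e0 (n+1) = (e0 n, (0 : CD n)) := rfl

lemma mul0_def (x y : CD 0) : x * y = (show ℝ from x) * (show ℝ from y) := rfl
lemma conj0_def (x : CD 0) : CD.conj x = x := rfl
lemma inner0_def (x y : CD 0) : CD.inner x y = (show ℝ from x) * (show ℝ from y) := rfl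
lemma add0_def (x y : CD 0) : x + y = (show ℝ from x) + (show ℝ from y) := rfl
lemma smul0_def (r : ℝ) (x : CD 0) : r • x = r * (show ℝ from x) := rfl
lemma neg0_def (x : CD 0) : -x = -(show ℝ from x) := rfl
lemma e0_zero : e0 0 = (1 : ℝ) := rfl

lemma pair_ext {x1 x2 y1 y2 : CD n} (h1 : x1 = y1) (h2 : x2 = y2) :
    ((x1, x2) : CD (n+1)) = (y1, y2) := by subst h1; subst h2; rfl
lemma fst_mk (x y : CD n) : ((x, y) : CD (n+1)).1 = x := rfl
lemma snd_mk (x y : CD n) : ((x, y) : CD (n+1)).2 = y := rfl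

lemma conj_zero : ∀ {n : ℕ}, CD.conj (0 : CD n) = 0
  | 0 => rfl
  | n+1 => by
    simp only [zero_def, conj_def, fst_mk, snd_mk]
    exact pair_ext conj_zero neg_zero

lemma conj_add : ∀ {n : ℕ} (x y : CD n), CD.conj (x + y) = CD.conj x + CD.conj y
  | 0, _, _ => rfl
  | n+1, x, y => by
    simp only [↓conj_def, ↓add_def, fst_mk, snd_mk]
    exact pair_ext (conj_add x.1 y.1) (by abel)

lemma conj_smul : ∀ {n : ℕ} (r : ℝ) (x : CD n), CD.conj (r • x) = r • CD.conj x
  | 0, _, _ => rfl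
  | n+1, r, x => by
    simp only [conj_def, smul_def, fst_mk, snd_mk]
    exact pair_ext (conj_smul r x.1) (smul_neg r x.2).symm

lemma conj_neg (x : CD n) : CD.conj (-x) = -CD.conj x := by
  have h := conj_smul (-1 : ℝ) x
  simpa using h

lemma conj_conj : ∀ {n : ℕ} (x : CD n), CD.conj (CD.conj x) = x
  | 0, _ => rfl
  | n+1, x => by
    simp only [conj_def, fst_mk, snd_mk]
    exact pair_ext (conj_conj x.1) (neg_neg x.2)

lemma conj_sub (x y : CD n) : CD.conj (x - y) = CD.conj x - CD.conj y := by
  rw [sub_eq_add_neg, conj_add, conj_neg, sub_eq_add_neg]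

lemma conj_e0 : ∀ {n : ℕ}, CD.conj (e0 n) = e0 n
  | 0 => rfl
  | n+1 => by
    simp only [e0_succ, conj_def, fst_mk, snd_mk]
    exact pair_ext conj_e0 neg_zero

lemma mul_add_aux : ∀ {n : ℕ},
    (∀ x y z : CD n, (x + y) * z = x * z + y * z) ∧
    (∀ x y z : CD n, x * (y + z) = x * y + x * z)
  | 0 => ⟨fun x y z => add_mul (show ℝ from x) (show ℝ from y) (show ℝ from z),
          fun x y z => mul_add (show ℝ from x) (show ℝ from y) (show ℝ from z)⟩
  | n+1 => by
    obtain ⟨ha, hm⟩ := @mul_add_aux n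
    refine ⟨fun x y z => ?_, fun x y z => ?_⟩
    · simp only [↓mul_def, ↓add_def, fst_mk, snd_mk]
      exact pair_ext (by rw [ha, hm]; abel) (by rw [hm, ha]; abel)
    · simp only [↓mul_def, ↓add_def, conj_add, fst_mk, snd_mk]
      exact pair_ext (by rw [hm, ha]; abel) (by rw [ha, hm]; abel)

lemma add_mul' (x y z : CD n) : (x + y) * z = x * z + y * z := mul_add_aux.1 x y z
lemma mul_add' (x y z : CD n) : x * (y + z) = x * y + x * z := mul_add_aux.2 x y z

lemma smul_mul_aux : ∀ {n : ℕ},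
    (∀ (r : ℝ) (x y : CD n), (r • x) * y = r • (x * y)) ∧
    (∀ (r : ℝ) (x y : CD n), x * (r • y) = r • (x * y))
  | 0 => ⟨fun r x y => by simp only [↓mul0_def, ↓smul0_def]; exact mul_assoc r (show ℝ from x) (show ℝ from y),
          fun r x y => by simp only [↓mul0_def, ↓smul0_def]; exact mul_left_comm (show ℝ from x) r (show ℝ from y)⟩
  | n+1 => by
    obtain ⟨hs1, hs2⟩ := @smul_mul_aux n
    refine ⟨fun r x y => ?_, fun r x y => ?_⟩
    · simp only [↓mul_def, ↓smul_def, fst_mk, snd_mk, hs1, hs2, smul_sub, smul_add]; rfl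
    · simp only [↓mul_def, ↓smul_def, conj_smul, fst_mk, snd_mk, hs1, hs2, smul_sub, smul_add]; rfl

lemma smul_mul' (r : ℝ) (x y : CD n) : (r • x) * y = r • (x * y) := smul_mul_aux.1 r x y
lemma mul_smul' (r : ℝ) (x y : CD n) : x * (r • y) = r • (x * y) := smul_mul_aux.2 r x y

lemma neg_mul' (x y : CD n) : (-x) * y = -(x * y) := by
  rw [← neg_one_smul ℝ x, smul_mul', neg_one_smul]
lemma mul_neg' (x y : CD n) : x * (-y) = -(x * y) := by
  rw [← neg_one_smul ℝ y, mul_smul', neg_one_smul]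

lemma zero_mul' (x : CD n) : (0 : CD n) * x = 0 := by
  have := smul_mul' (0 : ℝ) x x
  simpa using this
lemma mul_zero' (x : CD n) : x * (0 : CD n) = 0 := by
  have := mul_smul' (0 : ℝ) x x
  simpa using this

lemma sub_mul' (x y z : CD n) : (x - y) * z = x * z - y * z := by
  rw [sub_eq_add_neg, add_mul', neg_mul', sub_eq_add_neg]
lemma mul_sub' (x y z : CD n) : x * (y - z) = x * y - x * z := by
  rw [sub_eq_add_neg, mul_add', mul_neg', sub_eq_add_neg]

lemma e0_mul_aux : ∀ {n : ℕ},
    (∀ x : CD n, e0 n * x = x) ∧ (∀ x : CD n, x * e0 n = x)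
  | 0 => ⟨fun x => one_mul (show ℝ from x), fun x => mul_one (show ℝ from x)⟩
  | n+1 => by
    obtain ⟨h1, h2⟩ := @e0_mul_aux n
    refine ⟨fun x => ?_, fun x => ?_⟩
    · simp only [↓mul_def, ↓e0_succ, fst_mk, snd_mk, h1, h2, mul_zero', zero_mul',
        sub_zero, add_zero]
      exact Prod.mk.eta
    · simp only [↓mul_def, ↓e0_succ, fst_mk, snd_mk, conj_zero, conj_e0, h1, h2,
        mul_zero', zero_mul', sub_zero, zero_add]
      exact Prod.mk.eta

lemma e0_mul (x : CD n) : e0 n * x = x := e0_mul_aux.1 x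
lemma mul_e0 (x : CD n) : x * e0 n = x := e0_mul_aux.2 x

lemma conj_mul : ∀ {n : ℕ} (x y : CD n), CD.conj (x * y) = CD.conj y * CD.conj x
  | 0, x, y => mul_comm (show ℝ from x) (show ℝ from y)
  | n+1, x, y => by
    simp only [↓conj_def, ↓mul_def, fst_mk, snd_mk, conj_sub, conj_add, conj_neg,
      conj_conj, conj_mul x.1 y.1, conj_mul (CD.conj y.2) x.2, neg_mul', mul_neg',
      neg_neg]
    exact pair_ext (by abel) (by abel)

lemma inner_add_left : ∀ {n : ℕ} (x y z : CD n),
    CD.inner (x + y) z = CD.inner x z + CD.inner y z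
  | 0, x, y, z => add_mul (show ℝ from x) (show ℝ from y) (show ℝ from z)
  | n+1, x, y, z => by
    simp only [↓inner_def, ↓add_def, fst_mk, snd_mk,
      inner_add_left x.1 y.1 z.1, inner_add_left x.2 y.2 z.2]
    ring

lemma inner_add_right : ∀ {n : ℕ} (x y z : CD n),
    CD.inner x (y + z) = CD.inner x y + CD.inner x z
  | 0, x, y, z => mul_add (show ℝ from x) (show ℝ from y) (show ℝ from z)
  | n+1, x, y, z => by
    simp only [↓inner_def, ↓add_def, fst_mk, snd_mk,
      inner_add_right x.1 y.1 z.1, inner_add_right x.2 y.2 z.2]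
    ring

lemma inner_smul_left : ∀ {n : ℕ} (r : ℝ) (x y : CD n),
    CD.inner (r • x) y = r * CD.inner x y
  | 0, r, x, y => by simp only [↓inner0_def, ↓smul0_def]; exact mul_assoc r (show ℝ from x) (show ℝ from y)
  | n+1, r, x, y => by
    simp only [↓inner_def, ↓smul_def, fst_mk, snd_mk,
      inner_smul_left r x.1 y.1, inner_smul_left r x.2 y.2]
    ring

lemma inner_smul_right : ∀ {n : ℕ} (r : ℝ) (x y : CD n),
    CD.inner x (r • y) = r * CD.inner x y
  | 0, r, x, y => by simp only [↓inner0_def, ↓smul0_def]; exact mul_left_comm (show ℝ from x) r (show ℝ from y)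
  | n+1, r, x, y => by
    simp only [↓inner_def, ↓smul_def, fst_mk, snd_mk,
      inner_smul_right r x.1 y.1, inner_smul_right r x.2 y.2]
    ring

lemma inner_comm : ∀ {n : ℕ} (x y : CD n), CD.inner x y = CD.inner y x
  | 0, x, y => mul_comm (show ℝ from x) (show ℝ from y)
  | n+1, x, y => by
    simp only [inner_def, inner_comm x.1 y.1, inner_comm x.2 y.2]

lemma inner_zero_left (x : CD n) : CD.inner 0 x = 0 := by
  have := inner_smul_left (0 : ℝ) x x
  simpa using this
lemma inner_zero_right (x : CD n) : CD.inner x 0 = 0 := by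
  have := inner_smul_right (0 : ℝ) x x
  simpa using this

lemma inner_neg_left (x y : CD n) : CD.inner (-x) y = -CD.inner x y := by
  have := inner_smul_left (-1 : ℝ) x y
  simpa using this
lemma inner_neg_right (x y : CD n) : CD.inner x (-y) = -CD.inner x y := by
  have := inner_smul_right (-1 : ℝ) x y
  simpa using this

lemma inner_sub_left (x y z : CD n) : CD.inner (x - y) z = CD.inner x z - CD.inner y z := by
  rw [sub_eq_add_neg, inner_add_left, inner_neg_left, sub_eq_add_neg]
lemma inner_sub_right (x y z : CD n) : CD.inner x (y - z) = CD.inner x y - CD.inner x z := by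
  rw [sub_eq_add_neg, inner_add_right, inner_neg_right, sub_eq_add_neg]

lemma inner_self_nonneg : ∀ {n : ℕ} (x : CD n), 0 ≤ CD.inner x x
  | 0, x => mul_self_nonneg (show ℝ from x)
  | n+1, x => by
    simp only [inner_def]
    exact add_nonneg (inner_self_nonneg x.1) (inner_self_nonneg x.2)

lemma inner_e0_e0 : ∀ {n : ℕ}, CD.inner (e0 n) (e0 n) = 1
  | 0 => mul_one (1 : ℝ)
  | n+1 => by
    simp only [↓inner_def, ↓e0_succ, fst_mk, snd_mk, inner_e0_e0, inner_zero_left, add_zero]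

lemma inner_conj_conj : ∀ {n : ℕ} (x y : CD n),
    CD.inner (CD.conj x) (CD.conj y) = CD.inner x y
  | 0, x, y => rfl
  | n+1, x, y => by
    simp only [↓inner_def, ↓conj_def, fst_mk, snd_mk, inner_conj_conj x.1 y.1,
      inner_neg_left, inner_neg_right, neg_neg]

lemma inner_conj_left (x y : CD n) :
    CD.inner (CD.conj x) y = CD.inner x (CD.conj y) := by
  conv_lhs => rw [← conj_conj y]
  exact inner_conj_conj x (CD.conj y)

lemma adjoint_aux : ∀ {n : ℕ},
    (∀ a x y : CD n, CD.inner (a * x) y = CD.inner x (CD.conj a * y)) ∧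
    (∀ a x y : CD n, CD.inner (x * a) y = CD.inner x (y * CD.conj a))
  | 0 => ⟨fun a x y => by simp only [↓inner0_def, ↓mul0_def, ↓conj0_def]; exact (fun (a x y : ℝ) => (by ring : a * x * y = x * (a * y))) a x y,
          fun a x y => by simp only [↓inner0_def, ↓mul0_def, ↓conj0_def]; exact (fun (a x y : ℝ) => (by ring : x * a * y = x * (y * a))) a x y⟩
  | n+1 => by
    obtain ⟨ihl, ihr⟩ := @adjoint_aux n
    refine ⟨fun a x y => ?_, fun a x y => ?_⟩
    · have h1 := ihl a.1 x.1 y.1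
      have h2 := ihr a.1 x.2 y.2
      have h3 : CD.inner (a.2 * CD.conj x.1) y.2 = CD.inner x.1 (CD.conj y.2 * a.2) := by
        rw [ihl a.2 (CD.conj x.1) y.2, inner_conj_left, conj_mul, conj_conj]
      have h4 : CD.inner (CD.conj x.2 * a.2) y.1 = CD.inner x.2 (a.2 * CD.conj y.1) := by
        rw [ihl (CD.conj x.2) a.2 y.1, conj_conj, inner_comm x.2 (a.2 * CD.conj y.1),
          ihr (CD.conj y.1) a.2 x.2, conj_conj]
      simp only [↓mul_def, ↓conj_def, ↓inner_def, fst_mk, snd_mk, inner_sub_left,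
        inner_add_left, inner_sub_right, inner_add_right, mul_neg', neg_mul',
        inner_neg_left, inner_neg_right]
      linarith [h1, h2, h3, h4]
    · have k1 := ihr a.1 x.1 y.1
      have k2 : CD.inner (x.2 * CD.conj a.1) y.2 = CD.inner x.2 (y.2 * a.1) := by
        rw [ihr (CD.conj a.1) x.2 y.2, conj_conj]
      have k3 : CD.inner (CD.conj a.2 * x.2) y.1 = CD.inner x.2 (a.2 * y.1) := by
        rw [ihl (CD.conj a.2) x.2 y.1, conj_conj]
      have k4 := ihl a.2 x.1 y.2
      simp only [↓mul_def, ↓conj_def, ↓inner_def, fst_mk, snd_mk, inner_sub_left,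
        inner_add_left, inner_sub_right, inner_add_right, mul_neg', neg_mul',
        inner_neg_left, inner_neg_right, conj_neg, conj_conj]
      linarith [k1, k2, k3, k4]

lemma inner_mul_left (a x y : CD n) :
    CD.inner (a * x) y = CD.inner x (CD.conj a * y) := adjoint_aux.1 a x y
lemma inner_mul_right (a x y : CD n) :
    CD.inner (x * a) y = CD.inner x (y * CD.conj a) := adjoint_aux.2 a x y

lemma add_conj : ∀ {n : ℕ} (x : CD n),
    x + CD.conj x = (2 * CD.inner x (e0 n)) • e0 n
  | 0, x => by
    simp only [↓conj0_def, ↓inner0_def, ↓smul0_def, ↓add0_def, ↓e0_zero]; exact (fun (x : ℝ) => (by ring : x + x = 2 * (x * 1) * 1)) x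
  | n+1, x => by
    simp only [↓add_def, ↓conj_def, ↓e0_succ, ↓inner_def, ↓smul_def, fst_mk, snd_mk,
      inner_zero_right, add_zero, smul_zero, add_conj x.1]
    exact pair_ext rfl (by abel)

lemma quad_aux : ∀ {n : ℕ},
    (∀ x : CD n, x * CD.conj x = CD.inner x x • e0 n) ∧
    (∀ x : CD n, CD.conj x * x = CD.inner x x • e0 n)
  | 0 => ⟨fun x => by simp only [↓conj0_def, ↓mul0_def, ↓inner0_def, ↓smul0_def, ↓e0_zero]; exact (fun (x : ℝ) => (by ring : x * x = x * x * 1)) x,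
          fun x => by simp only [↓conj0_def, ↓mul0_def, ↓inner0_def, ↓smul0_def, ↓e0_zero]; exact (fun (x : ℝ) => (by ring : x * x = x * x * 1)) x⟩
  | n+1 => by
    obtain ⟨ihl, ihr⟩ := @quad_aux n
    refine ⟨fun x => ?_, fun x => ?_⟩
    · simp only [↓mul_def, ↓conj_def, fst_mk, snd_mk, conj_neg, conj_conj, neg_mul',
        mul_neg', sub_neg_eq_add, ↓inner_def, ↓e0_succ, ↓smul_def, smul_zero, add_smul,
        ihl x.1, ihl x.2, ihr x.1, ihr x.2]
      refine pair_ext ?_ ?_ <;> abel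
    · simp only [↓mul_def, ↓conj_def, fst_mk, snd_mk, conj_neg, conj_conj, neg_mul',
        mul_neg', sub_neg_eq_add, ↓inner_def, ↓e0_succ, ↓smul_def, smul_zero, add_smul,
        ihl x.1, ihl x.2, ihr x.1, ihr x.2]
      refine pair_ext ?_ ?_ <;> abel

lemma mul_conj_self (x : CD n) : x * CD.conj x = CD.inner x x • e0 n := quad_aux.1 x
lemma conj_mul_self (x : CD n) : CD.conj x * x = CD.inner x x • e0 n := quad_aux.2 x

end CD

namespace CD
variable {n : ℕ}

lemma sub0_def (x y : CD 0) : x - y = (show ℝ from x) - (show ℝ from y) := rfl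

lemma conj_eq_neg {x : CD n} (h : IsPure x) : CD.conj x = -x :=
  eq_neg_of_add_eq_zero_right h

lemma inner_e0_of_pure {x : CD n} (h : IsPure x) : CD.inner x (e0 n) = 0 := by
  have ht := add_conj x
  rw [(h : x + CD.conj x = 0)] at ht
  have h2 := congrArg (fun z => CD.inner z (e0 n)) ht
  simp only [inner_zero_left, inner_smul_left, inner_e0_e0, mul_one] at h2
  linarith

lemma assoc_conj (x y z : CD n) :
    CD.conj (assoc x y z) = -assoc (CD.conj z) (CD.conj y) (CD.conj x) := by
  simp only [assoc, conj_sub, conj_mul, neg_sub]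

lemma assoc_neg_neg_neg (x y z : CD n) : assoc (-x) (-y) (-z) = -assoc x y z := by
  simp only [assoc, neg_mul', mul_neg', neg_neg, neg_sub]
  abel

/-- Coordinates of an element of `A 2 = ℍ`. -/
def c00 (x : CD 2) : ℝ := x.1.1
def c01 (x : CD 2) : ℝ := x.1.2
def c10 (x : CD 2) : ℝ := x.2.1
def c11 (x : CD 2) : ℝ := x.2.2

/-- Building an element of `A 2 = ℍ` from four real coordinates. -/
def pair4 (p q r s : ℝ) : CD 2 := pair (pair p q) (pair r s)

lemma pair4_eta (x : CD 2) : pair4 (c00 x) (c01 x) (c10 x) (c11 x) = x := rfl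

lemma c00_add (x y : CD 2) : c00 (x + y) = c00 x + c00 y := rfl
lemma c01_add (x y : CD 2) : c01 (x + y) = c01 x + c01 y := rfl
lemma c10_add (x y : CD 2) : c10 (x + y) = c10 x + c10 y := rfl
lemma c11_add (x y : CD 2) : c11 (x + y) = c11 x + c11 y := rfl
lemma c00_smul (r : ℝ) (x : CD 2) : c00 (r • x) = r * c00 x := rfl
lemma c01_smul (r : ℝ) (x : CD 2) : c01 (r • x) = r * c01 x := rfl
lemma c10_smul (r : ℝ) (x : CD 2) : c10 (r • x) = r * c10 x := rfl
lemma c11_smul (r : ℝ) (x : CD 2) : c11 (r • x) = r * c11 x := rfl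

/-- The linear map `ℍ → A n` sending `1, i, j, k` to `e₀, a, b, ab`. -/
def phiFun (a b : CD n) : CD 2 →ₗ[ℝ] CD n where
  toFun x := c00 x • e0 n + c01 x • a + c10 x • b + c11 x • (a * b)
  map_add' x y := by
    simp only [c00_add, c01_add, c10_add, c11_add, add_smul]
    abel
  map_smul' r x := by
    simp only [c00_smul, c01_smul, c10_smul, c11_smul, mul_smul, RingHom.id_apply,
      smul_add]

lemma phiFun_apply (a b : CD n) (x : CD 2) :
    phiFun a b x = c00 x • e0 n + c01 x • a + c10 x • b + c11 x • (a * b) := rfl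

lemma phiFun_pair4 (a b : CD n) (p q r s : ℝ) :
    phiFun a b (pair4 p q r s) = p • e0 n + q • a + r • b + s • (a * b) := rfl

lemma ext2 {u v : CD 2} (h1 : c00 u = c00 v) (h2 : c01 u = c01 v)
    (h3 : c10 u = c10 v) (h4 : c11 u = c11 v) : u = v := by
  obtain ⟨⟨u11, u12⟩, u21, u22⟩ := u
  obtain ⟨⟨v11, v12⟩, v21, v22⟩ := v
  refine pair_ext (n := 1) ?_ ?_
  · exact pair_ext (n := 0) h1 h2
  · exact pair_ext (n := 0) h3 h4

lemma mul2 (p q r s p' q' r' s' : ℝ) :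
    (pair4 p q r s) * (pair4 p' q' r' s') =
    pair4 (p*p' - q*q' - r*r' - s*s') (p*q' + q*p' + r*s' - s*r')
          (p*r' + r*p' + s*q' - q*s') (p*s' + s*p' + q*r' - r*q') := by
  simp only [pair4, CD.pair, ↓mul_def, ↓conj_def, ↓sub_def, ↓add_def, ↓neg_def, fst_mk, snd_mk,
    ↓mul0_def, ↓conj0_def, ↓add0_def, ↓neg0_def, ↓sub0_def]
  refine pair_ext (n := 1) ?_ ?_ <;> refine pair_ext (n := 0) ?_ ?_ <;> change ((_ : ℝ) = _) <;> ring

end CD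

namespace CD

lemma mainLemma (n : ℕ) (a b : CD n)
    (hpa : CD.IsPure a) (hpb : CD.IsPure b)
    (hna : CD.norm a = 1) (hnb : CD.norm b = 1) (hab : CD.inner a b = 0)
    (h1 : CD.assoc a a b = 0) (h2 : CD.assoc a b b = 0) :
    (CD.norm (CD.e0 n) = 1 ∧ CD.norm (a * b) = 1 ∧
      CD.inner (CD.e0 n) a = 0 ∧ CD.inner (CD.e0 n) b = 0 ∧
      CD.inner (CD.e0 n) (a * b) = 0 ∧
      CD.inner a (a * b) = 0 ∧ CD.inner b (a * b) = 0) ∧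
    (∀ x ∈ Submodule.span ℝ {CD.e0 n, a, b, a * b},
      ∀ y ∈ Submodule.span ℝ {CD.e0 n, a, b, a * b},
        x * y ∈ Submodule.span ℝ {CD.e0 n, a, b, a * b}) ∧
    (∃ φ : CD 2 →ₗ[ℝ] CD n, Function.Injective φ ∧
      LinearMap.range φ = Submodule.span ℝ {CD.e0 n, a, b, a * b} ∧
      φ (CD.e0 2) = CD.e0 n ∧ φ q1 = a ∧ φ q2 = b ∧ φ q3 = a * b ∧
      ∀ x y : CD 2, φ (x * y) = φ x * φ y) := by
  have hca : CD.conj a = -a := conj_eq_neg hpa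
  have hcb : CD.conj b = -b := conj_eq_neg hpb
  have hia : CD.inner a a = 1 := Real.sqrt_eq_one.mp hna
  have hib : CD.inner b b = 1 := Real.sqrt_eq_one.mp hnb
  have ha2 : a * a = -(e0 n) := by
    have h := mul_conj_self a
    rw [hca, mul_neg', hia, one_smul] at h
    rw [← h, neg_neg]
  have hb2 : b * b = -(e0 n) := by
    have h := mul_conj_self b
    rw [hcb, mul_neg', hib, one_smul] at h
    rw [← h, neg_neg]
  have hpab : IsPure (a + b) := by
    show (a + b) + CD.conj (a + b) = 0
    rw [conj_add, hca, hcb]; abel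
  have hiabab : CD.inner (a + b) (a + b) = 2 := by
    rw [inner_add_left, inner_add_right, inner_add_right, hia, hib, hab,
      inner_comm b a, hab]
    norm_num
  have hanti : b * a = -(a * b) := by
    have h := mul_conj_self (a + b)
    rw [conj_eq_neg hpab, mul_neg', hiabab] at h
    have h2' : (a + b) * (a + b) = -((2:ℝ) • e0 n) := by rw [← h, neg_neg]
    have h3 : a * b + b * a = 0 := by
      have e1 : a * b + b * a = (a + b) * (a + b) - a * a - b * b := by
        rw [add_mul', mul_add', mul_add']; abel
      rw [e1, h2', ha2, hb2, two_smul]; abel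
    exact eq_neg_of_add_eq_zero_right h3
  have hab' : a * b = -(b * a) := by rw [hanti, neg_neg]
  have hpc : IsPure (a * b) := by
    show a * b + CD.conj (a * b) = 0
    rw [conj_mul, hca, hcb, neg_mul', mul_neg', neg_neg, hanti]
    abel
  have haab : a * (a * b) = -b := by
    have h := sub_eq_zero.mp (h1 : (a * a) * b - a * (a * b) = 0)
    rw [← h, ha2, neg_mul', e0_mul]
  have habb : (a * b) * b = -a := by
    have h := sub_eq_zero.mp (h2 : (a * b) * b - a * (b * b) = 0)
    rw [h, hb2, mul_neg', mul_e0]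
  have hbaa : assoc b a a = 0 := by
    have hc := assoc_conj b a a
    rw [hca, hcb, assoc_neg_neg_neg, h1, neg_zero, neg_zero] at hc
    have h' := congrArg CD.conj hc
    rwa [conj_conj, conj_zero] at h'
  have hbba : assoc b b a = 0 := by
    have hc := assoc_conj b b a
    rw [hca, hcb, assoc_neg_neg_neg, h2, neg_zero, neg_zero] at hc
    have h' := congrArg CD.conj hc
    rwa [conj_conj, conj_zero] at h'
  have hab_a : (a * b) * a = b := by
    rw [hab', neg_mul', sub_eq_zero.mp (hbaa : (b * a) * a - b * (a * a) = 0),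
      ha2, mul_neg', mul_e0, neg_neg]
  have hb_ab : b * (a * b) = a := by
    rw [hab', mul_neg', ← sub_eq_zero.mp (hbba : (b * b) * a - b * (b * a) = 0),
      hb2, neg_mul', e0_mul, neg_neg]
  have hiab1 : CD.inner (a * b) (a * b) = 1 := by
    rw [inner_mul_left a b (a * b), hca, neg_mul', haab, neg_neg, hib]
  have hcc : (a * b) * (a * b) = -(e0 n) := by
    have h := mul_conj_self (a * b)
    rw [conj_eq_neg hpc, mul_neg', hiab1, one_smul] at h
    rw [← h, neg_neg]
  have hae0 : CD.inner a (e0 n) = 0 := inner_e0_of_pure hpa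
  have hbe0 : CD.inner b (e0 n) = 0 := inner_e0_of_pure hpb
  have habe0 : CD.inner (a * b) (e0 n) = 0 := inner_e0_of_pure hpc
  have haba : CD.inner (a * b) a = 0 := by
    rw [inner_mul_left a b a, conj_mul_self, inner_smul_right, hia, hbe0]; ring
  have habb2 : CD.inner (a * b) b = 0 := by
    rw [inner_mul_right b a b, mul_conj_self, inner_smul_right, hib, hae0]; ring
  have hne0 : CD.norm (e0 n) = 1 := by
    show Real.sqrt (CD.inner (e0 n) (e0 n)) = 1
    rw [inner_e0_e0, Real.sqrt_one]
  have hnab : CD.norm (a * b) = 1 := by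
    show Real.sqrt (CD.inner (a * b) (a * b)) = 1
    rw [hiab1, Real.sqrt_one]
  have he0m : e0 n ∈ Submodule.span ℝ ({e0 n, a, b, a * b} : Set (CD n)) :=
    Submodule.subset_span (by simp)
  have ham : a ∈ Submodule.span ℝ ({e0 n, a, b, a * b} : Set (CD n)) :=
    Submodule.subset_span (by simp)
  have hbm : b ∈ Submodule.span ℝ ({e0 n, a, b, a * b} : Set (CD n)) :=
    Submodule.subset_span (by simp)
  have habm : a * b ∈ Submodule.span ℝ ({e0 n, a, b, a * b} : Set (CD n)) :=
    Submodule.subset_span (by simp)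
  have tbl : ∀ x ∈ ({e0 n, a, b, a * b} : Set (CD n)),
      ∀ y ∈ ({e0 n, a, b, a * b} : Set (CD n)),
      x * y ∈ Submodule.span ℝ ({e0 n, a, b, a * b} : Set (CD n)) := by
    intro x hx y hy
    simp only [Set.mem_insert_iff, Set.mem_singleton_iff] at hx hy
    rcases hx with rfl | rfl | rfl | rfl <;> rcases hy with rfl | rfl | rfl | rfl <;>
      (try simp only [e0_mul, mul_e0, ha2, hb2, hanti, haab, habb, hab_a, hb_ab, hcc]) <;>
      first
        | exact he0m | exact ham | exact hbm | exact habm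
        | exact Submodule.neg_mem _ he0m | exact Submodule.neg_mem _ ham
        | exact Submodule.neg_mem _ hbm | exact Submodule.neg_mem _ habm
  have key : ∀ x ∈ ({e0 n, a, b, a * b} : Set (CD n)),
      ∀ y ∈ Submodule.span ℝ ({e0 n, a, b, a * b} : Set (CD n)),
      x * y ∈ Submodule.span ℝ ({e0 n, a, b, a * b} : Set (CD n)) := by
    intro x hx y hy
    induction hy using Submodule.span_induction with
    | mem z hz => exact tbl x hx z hz
    | zero => rw [mul_zero']; exact Submodule.zero_mem _
    | add u v hu hv ihu ihv => rw [mul_add']; exact Submodule.add_mem _ ihu ihv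
    | smul r u hu ihu => rw [mul_smul']; exact Submodule.smul_mem _ r ihu
  have closure : ∀ x ∈ Submodule.span ℝ ({e0 n, a, b, a * b} : Set (CD n)),
      ∀ y ∈ Submodule.span ℝ ({e0 n, a, b, a * b} : Set (CD n)),
      x * y ∈ Submodule.span ℝ ({e0 n, a, b, a * b} : Set (CD n)) := by
    intro x hx
    induction hx using Submodule.span_induction with
    | mem z hz => exact key z hz
    | zero => intro y hy; rw [zero_mul']; exact Submodule.zero_mem _
    | add u v hu hv ihu ihv =>
      intro y hy; rw [add_mul']
      exact Submodule.add_mem _ (ihu y hy) (ihv y hy)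
    | smul r u hu ihu =>
      intro y hy; rw [smul_mul']
      exact Submodule.smul_mem _ r (ihu y hy)
  have phi_e0 : phiFun a b (CD.e0 2) = e0 n := by
    rw [show CD.e0 2 = pair4 1 0 0 0 from rfl, phiFun_pair4]
    simp
  have phi_q1 : phiFun a b q1 = a := by
    rw [show q1 = pair4 0 1 0 0 from rfl, phiFun_pair4]
    simp
  have phi_q2 : phiFun a b q2 = b := by
    rw [show q2 = pair4 0 0 1 0 from rfl, phiFun_pair4]
    simp
  have phi_q3 : phiFun a b q3 = a * b := by
    rw [show q3 = pair4 0 0 0 1 from rfl, phiFun_pair4]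
    simp
  have he0a : CD.inner (e0 n) a = 0 := by rw [inner_comm]; exact hae0
  have he0b : CD.inner (e0 n) b = 0 := by rw [inner_comm]; exact hbe0
  have he0ab : CD.inner (e0 n) (a * b) = 0 := by rw [inner_comm]; exact habe0
  have hba0 : CD.inner b a = 0 := by rw [inner_comm]; exact hab
  have haab0 : CD.inner a (a * b) = 0 := by rw [inner_comm]; exact haba
  have hbab0 : CD.inner b (a * b) = 0 := by rw [inner_comm]; exact habb2
  have k0 : ∀ z : CD 2, CD.inner (phiFun a b z) (e0 n) = c00 z := by
    intro z
    rw [phiFun_apply]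
    simp only [inner_add_left, inner_smul_left, inner_e0_e0, hae0, hbe0, habe0]
    ring
  have k1 : ∀ z : CD 2, CD.inner (phiFun a b z) a = c01 z := by
    intro z
    rw [phiFun_apply]
    simp only [inner_add_left, inner_smul_left, he0a, hia, hba0, haba]
    ring
  have k2 : ∀ z : CD 2, CD.inner (phiFun a b z) b = c10 z := by
    intro z
    rw [phiFun_apply]
    simp only [inner_add_left, inner_smul_left, he0b, hab, hib, habb2]
    ring
  have k3 : ∀ z : CD 2, CD.inner (phiFun a b z) (a * b) = c11 z := by
    intro z
    rw [phiFun_apply]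
    simp only [inner_add_left, inner_smul_left, he0ab, haab0, hbab0, hiab1]
    ring
  have hinj : Function.Injective (phiFun a b) := by
    intro x y hxy
    refine ext2 ?_ ?_ ?_ ?_
    · rw [← k0 x, ← k0 y, hxy]
    · rw [← k1 x, ← k1 y, hxy]
    · rw [← k2 x, ← k2 y, hxy]
    · rw [← k3 x, ← k3 y, hxy]
  have hrange : LinearMap.range (phiFun a b) =
      Submodule.span ℝ ({e0 n, a, b, a * b} : Set (CD n)) := by
    apply le_antisymm
    · rintro z ⟨w, rfl⟩
      rw [phiFun_apply]
      exact Submodule.add_mem _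
        (Submodule.add_mem _
          (Submodule.add_mem _ (Submodule.smul_mem _ _ he0m) (Submodule.smul_mem _ _ ham))
          (Submodule.smul_mem _ _ hbm))
        (Submodule.smul_mem _ _ habm)
    · rw [Submodule.span_le]
      intro z hz
      simp only [Set.mem_insert_iff, Set.mem_singleton_iff] at hz
      rcases hz with rfl | rfl | rfl | rfl
      · exact ⟨CD.e0 2, phi_e0⟩
      · exact ⟨q1, phi_q1⟩
      · exact ⟨q2, phi_q2⟩
      · exact ⟨q3, phi_q3⟩
  have hm : ∀ x y : CD 2, phiFun a b (x * y) = phiFun a b x * phiFun a b y := by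
    have keym : ∀ p q r s p' q' r' s' : ℝ,
        phiFun a b (pair4 p q r s * pair4 p' q' r' s') =
          phiFun a b (pair4 p q r s) * phiFun a b (pair4 p' q' r' s') := by
      intro p q r s p' q' r' s'
      rw [mul2, phiFun_pair4, phiFun_pair4, phiFun_pair4]
      simp only [add_mul', mul_add', smul_mul', mul_smul', e0_mul, mul_e0, ha2, hb2,
        hanti, haab, habb, hab_a, hb_ab, hcc, smul_neg, smul_smul]
      module
    intro x y
    exact keym (c00 x) (c01 x) (c10 x) (c11 x) (c00 y) (c01 y) (c10 y) (c11 y)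
  exact ⟨⟨hne0, hnab, he0a, he0b, he0ab, haab0, hbab0⟩, closure,
    ⟨phiFun a b, hinj, hrange, phi_e0, phi_q1, phi_q2, phi_q3, hm⟩⟩

end CD

/-- If `a`, `b` are pure elements of `A n` with `‖a‖ = ‖b‖ = 1`,
`⟨a,b⟩ = 0`, and `a` alternates strongly with `b` (`(a,a,b) = 0` and `(a,b,b) = 0`),
then `{e₀, a, b, ab}` is an orthonormal set, its span `V(a;b)` is closed under
multiplication, and `e₀ ↦ e₀`, `e₁ ↦ a`, `e₂ ↦ b`, `e₃ ↦ ab` defines an algebra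
isomorphism from `A 2 = ℍ` onto `V(a;b)`. -/
theorem statement17 (n : ℕ) (a b : CD n)
    (hpa : CD.IsPure a) (hpb : CD.IsPure b)
    (hna : CD.norm a = 1) (hnb : CD.norm b = 1) (hab : CD.inner a b = 0)
    (h1 : CD.assoc a a b = 0) (h2 : CD.assoc a b b = 0) :
    (CD.norm (CD.e0 n) = 1 ∧ CD.norm (a * b) = 1 ∧
      CD.inner (CD.e0 n) a = 0 ∧ CD.inner (CD.e0 n) b = 0 ∧
      CD.inner (CD.e0 n) (a * b) = 0 ∧
      CD.inner a (a * b) = 0 ∧ CD.inner b (a * b) = 0) ∧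
    (∀ x ∈ Submodule.span ℝ {CD.e0 n, a, b, a * b},
      ∀ y ∈ Submodule.span ℝ {CD.e0 n, a, b, a * b},
        x * y ∈ Submodule.span ℝ {CD.e0 n, a, b, a * b}) ∧
    (∃ φ : CD 2 →ₗ[ℝ] CD n, Function.Injective φ ∧
      LinearMap.range φ = Submodule.span ℝ {CD.e0 n, a, b, a * b} ∧
      φ (CD.e0 2) = CD.e0 n ∧ φ q1 = a ∧ φ q2 = b ∧ φ q3 = a * b ∧
      ∀ x y : CD 2, φ (x * y) = φ x * φ y) := by
  exact CD.mainLemma n a b hpa hpb hna hnb hab h1 h2
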